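/- Let f be a linear coding function over a commutative ring, let I be an acyclic set of G(f), and let u, v be vertices not in I such that (u,v) is an arc of G(f) but not of G(f^{-I}). Then G(f) contains a path from u to v whose internal vertices all lie in I. -/

import Mathlib

/-- Arc `(u,i)` of the interaction graph of a coding function `f`. -/
def arcCF {V A : Type*} [DecidableEq V] (f : (V → A) → V → A) (u i : V) : Prop :=
  ∃ (x : V → A) (a : A), f (Function.update x u a) i ≠ f x i

/-- The `v`-reduction of a coding function. -/
def reduceCF {V A : Type*} [DecidableEq V] (f : (V → A) → V → A) (v : V) :
    (V → A) → V → A :=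
  fun x i => if i = v then x i else f (Function.update x v (f x v)) i

/-- Path from `u` to `w` with all internal vertices in `I` (at least one). -/
def PathThrough {V : Type*} (G : V → V → Prop) (I : Set V) (u w : V) : Prop :=
  ∃ l : List V, l ≠ [] ∧ l.Nodup ∧ (∀ i ∈ l, i ∈ I) ∧ List.Chain G u (l ++ [w])

/-- `I` is an acyclic set of `G`. -/
def AcyclicIn {V : Type*} (G : V → V → Prop) (I : Set V) : Prop :=
  ∀ a ∈ I, ¬ ∃ l : List V, (∀ i ∈ l, i ∈ I) ∧ List.Chain G a (l ++ [a])

lemma auxDecomp {α : Type*} : ∀ (l : List α), ¬ l.Nodup →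
    ∃ (x : α) (l1 l2 l3 : List α), l = l1 ++ x :: (l2 ++ x :: l3) := by
  intro l
  induction l with
  | nil => intro h; exact absurd List.nodup_nil h
  | cons b l ih =>
    intro h
    rw [List.nodup_cons] at h
    push_neg at h
    by_cases hb : b ∈ l
    · obtain ⟨s, t, rfl⟩ := List.append_of_mem hb
      exact ⟨b, [], s, t, rfl⟩
    · obtain ⟨x, l1, l2, l3, rfl⟩ := ih (h hb)
      exact ⟨x, b :: l1, l2, l3, rfl⟩

lemma auxNodup {V : Type*} {G : V → V → Prop} {I : Set V} (hI : AcyclicIn G I)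
    {l : List V} (hl : ∀ x ∈ l, x ∈ I) {c d : V} (hc : List.Chain G c (l ++ [d])) :
    l.Nodup := by
  by_contra h
  obtain ⟨x, l1, l2, l3, rfl⟩ := auxDecomp l h
  have hx : x ∈ I := hl x (by simp)
  have h1 : List.Chain G c (l1 ++ x :: ((l2 ++ x :: l3) ++ [d])) := by
    simpa [List.append_assoc] using hc
  have h2 := (List.isChain_cons_split.mp h1).2
  have h3 : List.Chain G x (l2 ++ x :: (l3 ++ [d])) := by
    simpa [List.append_assoc, List.Chain] using h2
  have h4 := (List.isChain_cons_split.mp h3).1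
  exact hI x hx ⟨l2, fun y hy => hl y (by simp [hy]), h4⟩

lemma auxConcat {V : Type*} {G : V → V → Prop} {j w i : V} {l1 l2 : List V}
    (h1 : List.Chain G j (l1 ++ [w])) (h2 : List.Chain G w (l2 ++ [i])) :
    List.Chain G j ((l1 ++ w :: l2) ++ [i]) := by
  have : (l1 ++ w :: l2) ++ [i] = l1 ++ w :: (l2 ++ [i]) := by simp
  rw [this]
  exact List.isChain_cons_split.mpr ⟨h1, h2⟩

/-- Matrix of the `w`-reduction of a linear function with matrix `b`. -/
def redMat {V R : Type*} [DecidableEq V] [CommRing R] (b : V → V → R) (w : V) :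
    V → V → R :=
  fun i j => if i = w then (if j = w then 1 else 0)
    else ((if j = w then 0 else b i j) + b i w * b w j)

lemma auxLin {V R : Type*} [Fintype V] [DecidableEq V] [CommRing R]
    (g : (V → R) → V → R) (b : V → V → R)
    (hg : ∀ x i, g x i = ∑ j, b i j * x j) (w : V) :
    ∀ x i, reduceCF g w x i = ∑ j, redMat b w i j * x j := by
  intro x i
  by_cases hi : i = w
  · subst hi
    have hterm : ∀ j, redMat b i i j * x j = if j = i then x j else 0 := by
      intro j; by_cases hj : j = i <;> simp [redMat, hj]
    simp only [reduceCF, if_pos rfl]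
    rw [Finset.sum_congr rfl fun j _ => hterm j, Finset.sum_ite_eq' Finset.univ i x]
    simp
  · simp only [reduceCF, redMat, if_neg hi, hg]
    have key : ∀ j, b i j * Function.update x w (∑ k, b w k * x k) j
        = Function.update (fun j => b i j * x j) w (b i w * ∑ k, b w k * x k) j := by
      intro j
      by_cases hj : j = w
      · subst hj; simp
      · simp [Function.update_apply, hj]
    rw [Finset.sum_congr rfl fun j _ => key j,
      Finset.sum_update_of_mem (Finset.mem_univ w)]
    have key2 : ∀ j, ((if j = w then 0 else b i j) + b i w * b w j) * x j
        = Function.update (fun j => b i j * x j) w 0 j + b i w * (b w j * x j) := by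
      intro j
      by_cases hj : j = w
      · subst hj; simp; ring
      · simp [Function.update_apply, hj]; ring
    rw [Finset.sum_congr rfl fun j _ => key2 j, Finset.sum_add_distrib,
      Finset.sum_update_of_mem (Finset.mem_univ w), ← Finset.mul_sum]
    ring

theorem stmt18 {V : Type*} [Fintype V] [DecidableEq V]
    {R : Type*} [CommRing R] [Fintype R]
    (a : V → V → R) (ha : ∀ i u, a i u = 0 ∨ IsUnit (a i u))
    (I : Set V) (hI : AcyclicIn (fun u i => a i u ≠ 0) I)
    (s : List V) (hnd : s.Nodup) (hs : ∀ w, w ∈ s ↔ w ∈ I)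
    (u v : V) (hu : u ∉ I) (hv : v ∉ I) (harc : a v u ≠ 0)
    (hno : ¬ arcCF (List.foldl reduceCF (fun x i => ∑ w, a i w * x w) s) u v) :
    PathThrough (fun p w => a w p ≠ 0) I u v := by
  by_contra hpath
  set G : V → V → Prop := fun p q => a q p ≠ 0 with hGdef
  have key : ∀ (t : List V) (P : Set V) (g : (V → R) → V → R) (b : V → V → R),
      t.Nodup → (∀ x ∈ t, x ∈ I ∧ x ∉ P) → P ⊆ I →
      (∀ x i, g x i = ∑ j, b i j * x j) →
      (∀ i j, i ∉ P → b i j ≠ 0 →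
        ∃ l : List V, (∀ x ∈ l, x ∈ P) ∧ List.Chain G j (l ++ [i])) →
      b v u = a v u →
      ∃ B : V → V → R, (∀ x i, List.foldl reduceCF g t x i = ∑ j, B i j * x j)
        ∧ B v u = a v u := by
    intro t
    induction t with
    | nil => intro P g b _ _ _ hg _ hbvu; exact ⟨b, hg, hbvu⟩
    | cons w rest ih =>
      intro P g b hndt hmem hPI hg h1 hbvu
      obtain ⟨hwI, hwP⟩ := hmem w (by simp)
      have hvP : v ∉ P := fun h => hv (hPI h)
      have huP : u ∉ P := fun h => hu (hPI h)
      have hvw : v ≠ w := fun h => hv (h ▸ hwI)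
      have huw : u ≠ w := fun h => hu (h ▸ hwI)
      -- invariant (A) for the reduced matrix
      have h1' : ∀ i j, i ∉ (insert w P : Set V) → redMat b w i j ≠ 0 →
          ∃ l : List V, (∀ x ∈ l, x ∈ (insert w P : Set V)) ∧
            List.Chain G j (l ++ [i]) := by
        intro i j hi hne
        have hiw : i ≠ w := fun h => hi (h ▸ Set.mem_insert w P)
        have hiP : i ∉ P := fun h => hi (Set.mem_insert_of_mem w h)
        rw [redMat, if_neg hiw] at hne
        by_cases hprod : b i w * b w j = 0
        · rw [hprod, add_zero] at hne
          have hjw : j ≠ w := by intro h; rw [if_pos h] at hne; exact hne rfl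
          rw [if_neg hjw] at hne
          obtain ⟨l, hl, hc⟩ := h1 i j hiP hne
          exact ⟨l, fun x hx => Set.mem_insert_of_mem w (hl x hx), hc⟩
        · have hbw : b i w ≠ 0 := fun h => hprod (by rw [h, zero_mul])
          have hwj : b w j ≠ 0 := fun h => hprod (by rw [h, mul_zero])
          obtain ⟨l2, hl2, hc2⟩ := h1 i w hiP hbw
          obtain ⟨l1, hl1, hc1⟩ := h1 w j hwP hwj
          refine ⟨l1 ++ w :: l2, ?_, auxConcat hc1 hc2⟩
          intro x hx
          rcases List.mem_append.mp hx with hx | hx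
          · exact Set.mem_insert_of_mem w (hl1 x hx)
          · rcases List.mem_cons.mp hx with hx2 | hx2
            · exact hx2 ▸ Set.mem_insert w P
            · exact Set.mem_insert_of_mem w (hl2 x hx2)
      -- invariant (B)
      have hprod0 : b v w * b w u = 0 := by
        by_contra hprod
        have hbw : b v w ≠ 0 := fun h => hprod (by rw [h, zero_mul])
        have hwu : b w u ≠ 0 := fun h => hprod (by rw [h, mul_zero])
        obtain ⟨l2, hl2, hc2⟩ := h1 v w hvP hbw
        obtain ⟨l1, hl1, hc1⟩ := h1 w u hwP hwu
        have hlI : ∀ x ∈ l1 ++ w :: l2, x ∈ I := by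
          intro x hx
          rcases List.mem_append.mp hx with hx | hx
          · exact hPI (hl1 x hx)
          · rcases List.mem_cons.mp hx with hx2 | hx2
            · exact hx2 ▸ hwI
            · exact hPI (hl2 x hx2)
        have hc := auxConcat hc1 hc2
        exact hpath ⟨l1 ++ w :: l2, by simp, auxNodup hI hlI hc, hlI, hc⟩
      have hbvu' : redMat b w v u = a v u := by
        rw [redMat, if_neg hvw, if_neg huw, hprod0, add_zero, hbvu]
      have hfold : List.foldl reduceCF g (w :: rest) = List.foldl reduceCF
          (reduceCF g w) rest := rfl
      rw [hfold]
      refine ih (insert w P) (reduceCF g w) (redMat b w)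
        (List.nodup_cons.mp hndt).2 ?_ ?_ (auxLin g b hg w) h1' hbvu'
      · intro x hx
        refine ⟨(hmem x (by simp [hx])).1, ?_⟩
        intro hmem'
        rcases Set.mem_insert_iff.mp hmem' with rfl | h
        · exact (List.nodup_cons.mp hndt).1 hx
        · exact (hmem x (by simp [hx])).2 h
      · intro x hx
        rcases Set.mem_insert_iff.mp hx with rfl | h
        · exact hwI
        · exact hPI h
  obtain ⟨B, hB, hBvu⟩ := key s ∅ (fun x i => ∑ w, a i w * x w) a hnd
    (fun x hx => ⟨(hs x).mp hx, fun h => h⟩) (fun x hx => absurd hx (by simp))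
    (fun x i => rfl)
    (fun i j _ hne => ⟨[], by simp, List.isChain_pair.mpr hne⟩) rfl
  rw [arcCF] at hno
  push_neg at hno
  have heval := hno (fun _ => (0 : R)) 1
  rw [hB, hB] at heval
  have hL : ∑ j, B v j * Function.update (fun _ => (0 : R)) u 1 j = B v u := by
    have : ∀ j, B v j * Function.update (fun _ => (0 : R)) u 1 j
        = if j = u then B v j else 0 := by
      intro j
      by_cases hj : j = u
      · subst hj; simp
      · simp [Function.update_apply, hj]
    rw [Finset.sum_congr rfl fun j _ => this j, Finset.sum_ite_eq' Finset.univ u]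
    simp
  rw [hL] at heval
  simp only [mul_zero, Finset.sum_const_zero] at heval
  rw [heval] at hBvu
  exact harc hBvu.symm
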